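/- Let n, m be natural numbers, let a, b ∈ ℤⁿ be column vectors, and let P be an n × m integer matrix. Let A = (a | b | P) be the n × (m+2) integer matrix whose first column is a, second column is b, and remaining columns are those of P. Let A' be the (n+1) × (m+3) integer matrix whose first n rows form the block (a | b | P | 0) (where 0 is a zero column) and whose last row is (2, 1, 0, …, 0, 1), i.e., entry 2 under column a, entry 1 under column b, zeros under the columns of P, and entry 1 in the last column. Then A' is ℤ-equivalent to the block-diagonal matrix A ⊕ (1), i.e., the (n+1) × (m+3) matrix whose first n rows are (a | b | P | 0) and whose last row is (0, 0, …, 0, 1). -/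

import Mathlib

theorem reidemeister_I_matrix (n m : ℕ) (a b : Fin n → ℤ)
    (P : Matrix (Fin n) (Fin m) ℤ) :
    -- `A = (a | b | P)`
    ∀ A : Matrix (Fin n) (Fin 2 ⊕ Fin m) ℤ,
      A = Matrix.fromCols (Matrix.of fun i j => if j = 0 then a i else b i) P →
    -- `A'` : first `n` rows are `(a | b | P | 0)`, last row is `(2, 1, 0, …, 0, 1)`
    ∀ A' : Matrix (Fin n ⊕ Fin 1) ((Fin 2 ⊕ Fin m) ⊕ Fin 1) ℤ,
      A' = Matrix.fromBlocks A 0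
        (Matrix.of fun _ =>
          Sum.elim (fun j : Fin 2 => if j = 0 then (2 : ℤ) else 1) (fun _ => 0)) 1 →
    -- `A'` is ℤ-equivalent to `A ⊕ (1)`
    ∃ (P' : Matrix (Fin n ⊕ Fin 1) (Fin n ⊕ Fin 1) ℤ)
      (Q' : Matrix ((Fin 2 ⊕ Fin m) ⊕ Fin 1) ((Fin 2 ⊕ Fin m) ⊕ Fin 1) ℤ),
      IsUnit P'.det ∧ IsUnit Q'.det ∧ P' * A' * Q' = Matrix.fromBlocks A 0 0 1 := by
  intro A hA A' hA'
  set v : Matrix (Fin 1) (Fin 2 ⊕ Fin m) ℤ :=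
    Matrix.of fun _ =>
      Sum.elim (fun j : Fin 2 => if j = 0 then (-2 : ℤ) else -1) (fun _ => 0) with hv
  refine ⟨1, Matrix.fromBlocks 1 0 v 1, by simp, ?_, ?_⟩
  · rw [Matrix.det_fromBlocks_zero₁₂]
    simp
  · rw [Matrix.one_mul, hA', Matrix.fromBlocks_multiply]
    congr 1 <;> simp [hv]
    · funext i j
      simp [Matrix.add_apply]
      cases j <;> simp
      split_ifs <;> ring
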